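/- Suppose T ∈ Q has true height α(T) and f is a witness for T. Then the tree T* ⊆ 2^{<α(T)+ω} defined by T* ∩ 2^{<α(T)} = T, T*_{[α(T)]} = lim_{α(T)}(T), and above level α(T) all finite binary extensions of elements of lim_{α(T)}(T), is a condition in Q with α(T*) = α(T)+ω, T ≤_Q T*, and lim_{α(T)}(T*_{[<α(T)]}) \ T*_{[α(T)]} is empty (so η_{α(T)}(T*) is undefined). -/

import Mathlib

open Ordinal Set Cardinal

/-- A transfinite binary sequence: a length and values, zero beyond the length. -/
structure BSeq where
  len : Ordinal.{0}
  val : Ordinal.{0} → Bool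
  val_eq_false : ∀ β, len ≤ β → val β = false

namespace BSeq

/-- The empty sequence. -/
def nil : BSeq := ⟨0, fun _ => false, fun _ _ => rfl⟩

/-- Restriction `η↾β` of a sequence to length `β`. -/
noncomputable def restrict (η : BSeq) (β : Ordinal) : BSeq :=
  ⟨min η.len β, fun γ => if γ < β then η.val γ else false, by
    intro γ hγ
    rcases min_le_iff.mp hγ with h | h
    · by_cases hb : γ < β
      · simpa [hb] using η.val_eq_false γ h
      · simp [hb]
    · simp [not_lt.mpr h]⟩

/-- `ν ⊴ η` : `ν` is an initial segment of `η`. -/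
def IsInitSeg (ν η : BSeq) : Prop :=
  ν.len ≤ η.len ∧ ∀ β < ν.len, ν.val β = η.val β

/-- `ν ◁ η` : `ν` is a proper initial segment of `η`. -/
def IsStrictInitSeg (ν η : BSeq) : Prop :=
  ν.IsInitSeg η ∧ ν.len < η.len

/-- `η⌢⟨b⟩`, appending one bit. -/
noncomputable def snoc (η : BSeq) (b : Bool) : BSeq :=
  ⟨η.len + 1, fun β => if β = η.len then b else η.val β, by
    intro β hβ
    have h1 : η.len < β := by
      exact lt_of_lt_of_le (lt_add_one η.len) hβ
    beta_reduce
    rw [if_neg (ne_of_gt h1)]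
    exact η.val_eq_false β h1.le⟩

end BSeq

/-- The level `T_{[β]} = T ∩ 2^β`. -/
def level (T : Set BSeq) (β : Ordinal) : Set BSeq := {η ∈ T | η.len = β}

/-- `T_{[<β]} = T ∩ 2^{<β}`. -/
def levelLT (T : Set BSeq) (β : Ordinal) : Set BSeq := {η ∈ T | η.len < β}

/-- `lim_δ(T) = {η ∈ 2^δ : ∀ β < δ, η↾β ∈ T}`. -/
def limAt (T : Set BSeq) (δ : Ordinal) : Set BSeq :=
  {η | η.len = δ ∧ ∀ β < δ, η.restrict β ∈ T}

/-- `T ⊆ 2^{<α}` is an `α`-tree. -/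
structure IsTree (α : Ordinal) (T : Set BSeq) : Prop where
  limit : Order.IsSuccLimit α
  len_lt : ∀ η ∈ T, η.len < α
  nil_mem : BSeq.nil ∈ T
  downClosed : ∀ ν η : BSeq, ν.IsStrictInitSeg η → η ∈ T → ν ∈ T
  succ_mem : ∀ η ∈ T, ∀ b : Bool, η.snoc b ∈ T
  ext_mem : ∀ η ∈ T, ∀ β, η.len ≤ β → β < α → ∃ ρ ∈ T, η.IsInitSeg ρ ∧ ρ.len = β

/-- `T` has true height `α`: every node lies on a cofinal branch through `T`. -/
def TrueHeight (α : Ordinal) (T : Set BSeq) : Prop :=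
  ∀ η ∈ T, ∃ ν : BSeq, ν.len = α ∧ η.IsStrictInitSeg ν ∧ ∀ β < α, ν.restrict β ∈ T

/-- A condition of the forcing `Q`: a tree of true height `α` (a limit ordinal)
omitting at most one limit point at each limit level. -/
structure IsCond (α : Ordinal) (T : Set BSeq) : Prop where
  tree : IsTree α T
  trueHeight : TrueHeight α T
  omits_le_one : ∀ δ < α, Order.IsSuccLimit δ → (limAt T δ \ level T δ).Subsingleton

/-- The end-extension order of `Q`. -/
def QLe (α₁ : Ordinal) (T₁ : Set BSeq) (α₂ : Ordinal) (T₂ : Set BSeq) : Prop :=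
  α₁ ≤ α₂ ∧ T₁ = levelLT T₂ α₁

/-- `f` is a witness for `T` (of height `α`). -/
def IsWitness (α : Ordinal) (T : Set BSeq) (f : BSeq → BSeq) : Prop :=
  ∀ η ∈ T, f η ∈ limAt T α ∧ η.IsStrictInitSeg (f η)

/-- The order of `Q^*`. -/
def QsLe (α₁ : Ordinal) (T₁ : Set BSeq) (f₁ : BSeq → BSeq)
    (α₂ : Ordinal) (T₂ : Set BSeq) (f₂ : BSeq → BSeq) : Prop :=
  QLe α₁ T₁ α₂ T₂ ∧ ∀ η ∈ T₁, (f₁ η).IsInitSeg (f₂ η)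

/-- `C` is a club (closed unbounded) subset of `μ`. -/
def IsClubIn (C : Set Ordinal) (μ : Ordinal) : Prop :=
  C ⊆ Set.Iio μ ∧
  (∀ δ < μ, Order.IsSuccLimit δ → (∀ β < δ, ∃ γ ∈ C, β < γ ∧ γ < δ) → δ ∈ C) ∧
  (∀ β < μ, ∃ γ ∈ C, β < γ ∧ γ < μ)

/-- `S` is stationary in `μ`. -/
def IsStationaryIn (S : Set Ordinal) (μ : Ordinal) : Prop :=
  ∀ C, IsClubIn C μ → (S ∩ C).Nonempty

/-- The set of accumulation points of a set of ordinals. -/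
def accPts (C : Set Ordinal) : Set Ordinal :=
  {β | 0 < β ∧ ∀ γ < β, ∃ δ ∈ C, γ < δ ∧ δ < β}

/-- The canonical extension `T^*` of `T` to height `α + ω`: below `α` it is `T`,
at level `α` it is `lim_α(T)`, and above it consists of all finite binary
extensions of elements of `lim_α(T)`. -/
def starExt (α : Ordinal) (T : Set BSeq) : Set BSeq :=
  T ∪ {ρ : BSeq | α ≤ ρ.len ∧ ρ.len < α + Ordinal.omega0 ∧ ρ.restrict α ∈ limAt T α}

section Helpers

namespace BSeq

theorem ext' {η ν : BSeq} (h1 : η.len = ν.len) (h2 : ∀ β, η.val β = ν.val β) : η = ν := by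
  cases η; cases ν
  simp only [mk.injEq] at *
  exact ⟨h1, funext h2⟩

theorem extBelow {η ν : BSeq} (h1 : η.len = ν.len)
    (h2 : ∀ β < η.len, η.val β = ν.val β) : η = ν := by
  refine ext' h1 (fun β => ?_)
  by_cases h : β < η.len
  · exact h2 β h
  · rw [η.val_eq_false β (not_lt.1 h), ν.val_eq_false β (h1 ▸ not_lt.1 h)]

@[simp] theorem restrict_len (η : BSeq) (β : Ordinal) : (η.restrict β).len = min η.len β := rfl

theorem restrict_val (η : BSeq) (β γ : Ordinal) :
    (η.restrict β).val γ = if γ < β then η.val γ else false := rfl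

theorem restrict_val_of_lt (η : BSeq) {β γ : Ordinal} (h : γ < β) :
    (η.restrict β).val γ = η.val γ := if_pos h

theorem restrict_of_le {η : BSeq} {β : Ordinal} (h : η.len ≤ β) : η.restrict β = η := by
  refine ext' (by simp [min_eq_left h]) (fun γ => ?_)
  rw [restrict_val]
  by_cases hg : γ < β
  · simp [hg]
  · simp only [hg, if_false]
    exact (η.val_eq_false γ (le_trans h (not_lt.1 hg))).symm

theorem restrict_restrict (η : BSeq) {β γ : Ordinal} (h : γ ≤ β) :
    (η.restrict β).restrict γ = η.restrict γ := by
  refine ext' ?_ (fun δ => ?_)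
  · simp [min_assoc, min_eq_right h]
  · rw [restrict_val, restrict_val, restrict_val]
    by_cases hd : δ < γ
    · simp [hd, lt_of_lt_of_le hd h]
    · simp [hd]

theorem restrict_isInitSeg (η : BSeq) (β : Ordinal) : (η.restrict β).IsInitSeg η := by
  constructor
  · simp
  · intro γ hγ
    simp only [restrict_len, lt_min_iff] at hγ
    exact restrict_val_of_lt η hγ.2

theorem eq_restrict_of_initSeg {ν η : BSeq} (h : ν.IsInitSeg η) : ν = η.restrict ν.len := by
  refine extBelow (by simp [min_eq_right h.1]) (fun β hβ => ?_)
  rw [restrict_val_of_lt η hβ]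
  exact h.2 β hβ

@[simp] theorem snoc_len (η : BSeq) (b : Bool) : (η.snoc b).len = η.len + 1 := rfl

theorem snoc_restrict (η : BSeq) (b : Bool) {γ : Ordinal} (h : γ ≤ η.len) :
    (η.snoc b).restrict γ = η.restrict γ := by
  refine ext' ?_ (fun δ => ?_)
  · simp only [restrict_len, snoc_len]
    rw [min_eq_right (le_trans h (le_of_lt (lt_add_one _))), min_eq_right h]
  · rw [restrict_val, restrict_val]
    by_cases hd : δ < γ
    · have : δ ≠ η.len := ne_of_lt (lt_of_lt_of_le hd h)
      simp [hd, BSeq.snoc, this]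
    · simp [hd]

/-- Pad a sequence with zeros up to length `β`. -/
noncomputable def pad (σ : BSeq) (β : Ordinal) : BSeq :=
  ⟨max σ.len β, σ.val, fun γ h => σ.val_eq_false γ (le_trans (le_max_left _ _) h)⟩

@[simp] theorem pad_len (σ : BSeq) (β : Ordinal) : (pad σ β).len = max σ.len β := rfl

@[simp] theorem pad_val (σ : BSeq) (β γ : Ordinal) : (pad σ β).val γ = σ.val γ := rfl

theorem pad_restrict₁ (σ : BSeq) (β : Ordinal) {γ : Ordinal} (h : γ ≤ σ.len) :
    (pad σ β).restrict γ = σ.restrict γ := by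
  refine ext' ?_ (fun δ => ?_)
  · simp only [restrict_len, pad_len]
    rw [min_eq_right (le_trans h (le_max_left _ _)), min_eq_right h]
  · rw [restrict_val, restrict_val, pad_val]

theorem pad_restrict₂ (σ : BSeq) {β γ : Ordinal} (h : σ.len ≤ γ) (hb : γ ≤ β) :
    (pad σ β).restrict γ = pad σ γ := by
  refine ext' ?_ (fun δ => ?_)
  · simp only [restrict_len, pad_len]
    rw [min_eq_right (le_trans hb (le_max_right _ _)), max_eq_right h]
  · rw [restrict_val, pad_val, pad_val]
    by_cases hd : δ < γ
    · simp [hd]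
    · simp only [hd, if_false]
      exact (σ.val_eq_false δ (le_trans h (not_lt.1 hd))).symm

theorem pad_isInitSeg (σ : BSeq) (β : Ordinal) : σ.IsInitSeg (pad σ β) :=
  ⟨le_max_left _ _, fun _ _ => rfl⟩

end BSeq

theorem limit_le_of_lt_add_omega {α δ : Ordinal} (_hα : Order.IsSuccLimit α) (hδ : Order.IsSuccLimit δ)
    (h : δ < α + Ordinal.omega0) : δ ≤ α := by
  by_contra hc
  push_neg at hc
  have hle : α ≤ δ := hc.le
  have heq : α + (δ - α) = δ := Ordinal.add_sub_cancel_of_le hle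
  have hlt : δ - α < Ordinal.omega0 := by
    rw [← add_lt_add_iff_left α, heq]; exact h
  obtain ⟨n, hn⟩ := Ordinal.lt_omega0.1 hlt
  have hn0 : n ≠ 0 := by
    rintro rfl
    simp only [Nat.cast_zero] at hn
    rw [hn, add_zero] at heq
    exact absurd heq (ne_of_lt hc)
  obtain ⟨k, rfl⟩ := Nat.exists_eq_succ_of_ne_zero hn0
  have : δ = (α + k) + 1 := by
    rw [← heq, hn]
    push_cast
    rw [add_assoc]
  have hk : α + (k : Ordinal) < δ := by rw [this]; exact lt_add_one _
  have h2 : (α + (k : Ordinal)) + 1 < δ := by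
    have h3 := hδ.succ_lt hk
    rwa [Order.succ_eq_add_one] at h3
  rw [this] at h2
  exact absurd h2 (lt_irrefl _)

end Helpers

section StarLemmas

variable {α : Ordinal} {T : Set BSeq}

theorem mem_star_low {ρ : BSeq} (hρ : ρ ∈ starExt α T) (h : ρ.len < α) : ρ ∈ T := by
  rcases hρ with h1 | h1
  · exact h1
  · exact absurd h1.1 (not_le.2 h)

theorem levelLT_star (hT : IsTree α T) : levelLT (starExt α T) α = T := by
  ext ρ
  constructor
  · rintro ⟨h1, h2⟩
    exact mem_star_low h1 h2
  · intro h
    exact ⟨Or.inl h, hT.len_lt ρ h⟩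

theorem limAt_star (hT : IsTree α T) {δ : Ordinal} (hδ : δ ≤ α) :
    limAt (starExt α T) δ = limAt T δ := by
  ext η
  simp only [limAt, Set.mem_setOf_eq]
  refine and_congr_right fun hl => forall₂_congr fun β hβ => ⟨fun h => ?_, fun h => Or.inl h⟩
  have hlen : (η.restrict β).len < α := by
    rw [BSeq.restrict_len, hl, min_eq_right hβ.le]
    exact lt_of_lt_of_le hβ hδ
  exact mem_star_low h hlen

theorem level_star_lt (hT : IsTree α T) {δ : Ordinal} (hδ : δ < α) :
    level (starExt α T) δ = level T δ := by
  ext ρ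
  constructor
  · rintro ⟨h1, h2⟩
    exact ⟨mem_star_low h1 (h2 ▸ hδ), h2⟩
  · rintro ⟨h1, h2⟩
    exact ⟨Or.inl h1, h2⟩

theorem level_star (hT : IsTree α T) : level (starExt α T) α = limAt T α := by
  have hαω : α < α + Ordinal.omega0 := lt_add_of_pos_right α Ordinal.omega0_pos
  ext ρ
  constructor
  · rintro ⟨h1 | h1, h2⟩
    · exact absurd (hT.len_lt ρ h1) (by rw [h2]; exact lt_irrefl α)
    · have h3 := h1.2.2
      rwa [BSeq.restrict_of_le h2.le] at h3
  · intro h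
    refine ⟨Or.inr ⟨h.1.ge, ?_, ?_⟩, h.1⟩
    · rw [h.1]; exact hαω
    · rw [BSeq.restrict_of_le h.1.le]; exact h

end StarLemmas

theorem stmt7 (α : Ordinal) (T : Set BSeq) (f : BSeq → BSeq)
    (hT : IsCond α T) (hf : IsWitness α T f) :
    IsCond (α + Ordinal.omega0) (starExt α T) ∧
    QLe α T (α + Ordinal.omega0) (starExt α T) ∧
    level (starExt α T) α = limAt T α ∧
    limAt (levelLT (starExt α T) α) α \ level (starExt α T) α = ∅ := by
  have htree := hT.tree
  have hlim := htree.limit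
  have hαω : α < α + Ordinal.omega0 := lt_add_of_pos_right α Ordinal.omega0_pos
  have hlimω : Order.IsSuccLimit (α + Ordinal.omega0) := Ordinal.isSuccLimit_add α Ordinal.isSuccLimit_omega0
  -- restrictions of padded branches stay in `starExt`
  have upper_mem : ∀ ρ : BSeq, α ≤ ρ.len → ρ.len < α + Ordinal.omega0 →
      ρ.restrict α ∈ limAt T α → ∀ β < α + Ordinal.omega0,
      (BSeq.pad ρ (α + Ordinal.omega0)).restrict β ∈ starExt α T := by
    intro ρ hρ1 hρ2 hρ3 β hβ
    rcases lt_or_ge β α with h | h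
    · rw [BSeq.pad_restrict₁ ρ _ (le_trans h.le hρ1), ← BSeq.restrict_restrict ρ h.le]
      exact Or.inl (hρ3.2 β h)
    · rcases le_total β ρ.len with h2 | h2
      · rw [BSeq.pad_restrict₁ ρ _ h2]
        have hlen : (ρ.restrict β).len = β := by
          rw [BSeq.restrict_len, min_eq_right h2]
        refine Or.inr ⟨by rw [hlen]; exact h, by rw [hlen]; exact hβ, ?_⟩
        rwa [BSeq.restrict_restrict ρ h]
      · rw [BSeq.pad_restrict₂ ρ h2 hβ.le]
        have hlen : (BSeq.pad ρ β).len = β := by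
          rw [BSeq.pad_len, max_eq_right h2]
        refine Or.inr ⟨by rw [hlen]; exact h, by rw [hlen]; exact hβ, ?_⟩
        rwa [BSeq.pad_restrict₁ ρ β hρ1]
  -- the upper part is closed under padding to arbitrary lengths below α+ω
  have pad_upper : ∀ ρ : BSeq, α ≤ ρ.len → ρ.restrict α ∈ limAt T α →
      ∀ β, ρ.len ≤ β → β < α + Ordinal.omega0 → BSeq.pad ρ β ∈ starExt α T := by
    intro ρ hρ1 hρ3 β h2 hβ
    have hlen : (BSeq.pad ρ β).len = β := by rw [BSeq.pad_len, max_eq_right h2]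
    refine Or.inr ⟨by rw [hlen]; exact le_trans hρ1 h2, by rw [hlen]; exact hβ, ?_⟩
    rwa [BSeq.pad_restrict₁ ρ β hρ1]
  -- witness values lie in the upper part
  have fmem : ∀ η ∈ T, α ≤ (f η).len ∧ (f η).len < α + Ordinal.omega0 ∧
      (f η).restrict α ∈ limAt T α := by
    intro η hη
    obtain ⟨hl, _⟩ := hf η hη
    refine ⟨hl.1.ge, by rw [hl.1]; exact hαω, ?_⟩
    rwa [BSeq.restrict_of_le hl.1.le]
  have tree : IsTree (α + Ordinal.omega0) (starExt α T) := by
    refine ⟨hlimω, ?_, Or.inl htree.nil_mem, ?_, ?_, ?_⟩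
    · -- len_lt
      rintro η (h | h)
      · exact lt_trans (htree.len_lt η h) hαω
      · exact h.2.1
    · -- downClosed
      rintro ν η hνη (h | h)
      · exact Or.inl (htree.downClosed ν η hνη h)
      · have hν : ν = η.restrict ν.len := BSeq.eq_restrict_of_initSeg hνη.1
        rcases lt_or_ge ν.len α with h2 | h2
        · refine Or.inl ?_
          rw [hν, ← BSeq.restrict_restrict η h2.le]
          exact h.2.2.2 ν.len h2
        · refine Or.inr ⟨h2, lt_trans hνη.2 h.2.1, ?_⟩
          rw [hν, BSeq.restrict_restrict η h2]
          exact h.2.2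
    · -- succ_mem
      rintro η (h | h) b
      · exact Or.inl (htree.succ_mem η h b)
      · refine Or.inr ⟨?_, ?_, ?_⟩
        · rw [BSeq.snoc_len]
          exact le_trans h.1 (le_of_lt (lt_add_one _))
        · rw [BSeq.snoc_len]
          have := hlimω.succ_lt h.2.1
          rwa [Order.succ_eq_add_one] at this
        · rw [BSeq.snoc_restrict η b h.1]
          exact h.2.2
    · -- ext_mem
      rintro η (h | h) β h1 h2
      · rcases lt_or_ge β α with h3 | h3
        · obtain ⟨ρ, hρT, hρ1, hρ2⟩ := htree.ext_mem η h β h1 h3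
          exact ⟨ρ, Or.inl hρT, hρ1, hρ2⟩
        · obtain ⟨hf1, hf2, hf3⟩ := fmem η h
          obtain ⟨hfl, hfs⟩ := hf η h
          refine ⟨BSeq.pad (f η) β, pad_upper (f η) hf1 hf3 β (hfl.1 ▸ h3) h2, ?_, ?_⟩
          · refine ⟨?_, fun γ hγ => ?_⟩
            · rw [BSeq.pad_len]
              exact le_trans (le_of_lt hfs.2) (le_max_left _ _)
            · rw [BSeq.pad_val]
              exact hfs.1.2 γ hγ
          · rw [BSeq.pad_len, hfl.1, max_eq_right h3]
      · refine ⟨BSeq.pad η β, pad_upper η h.1 h.2.2 β h1 h2, BSeq.pad_isInitSeg η β, ?_⟩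
        rw [BSeq.pad_len, max_eq_right h1]
  have trueH : TrueHeight (α + Ordinal.omega0) (starExt α T) := by
    rintro η (h | h)
    · obtain ⟨hf1, hf2, hf3⟩ := fmem η h
      obtain ⟨hfl, hfs⟩ := hf η h
      refine ⟨BSeq.pad (f η) (α + Ordinal.omega0), ?_, ⟨⟨?_, fun γ hγ => ?_⟩, ?_⟩, ?_⟩
      · rw [BSeq.pad_len, max_eq_right hf2.le]
      · rw [BSeq.pad_len, max_eq_right hf2.le]
        exact le_of_lt (lt_trans (htree.len_lt η h) hαω)
      · rw [BSeq.pad_val]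
        exact hfs.1.2 γ hγ
      · rw [BSeq.pad_len, max_eq_right hf2.le]
        exact lt_trans (htree.len_lt η h) hαω
      · exact fun β hβ => upper_mem (f η) hf1 hf2 hf3 β hβ
    · refine ⟨BSeq.pad η (α + Ordinal.omega0), ?_, ⟨⟨?_, fun γ hγ => rfl⟩, ?_⟩, ?_⟩
      · rw [BSeq.pad_len, max_eq_right h.2.1.le]
      · rw [BSeq.pad_len]
        exact le_max_left _ _
      · rw [BSeq.pad_len, max_eq_right h.2.1.le]
        exact h.2.1
      · exact fun β hβ => upper_mem η h.1 h.2.1 h.2.2 β hβ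
  have omits : ∀ δ < α + Ordinal.omega0, Order.IsSuccLimit δ →
      (limAt (starExt α T) δ \ level (starExt α T) δ).Subsingleton := by
    intro δ hδ hδlim
    rcases lt_or_eq_of_le (limit_le_of_lt_add_omega hlim hδlim hδ) with h | h
    · rw [limAt_star htree h.le, level_star_lt htree h]
      exact hT.omits_le_one δ h hδlim
    · subst h
      rw [limAt_star htree le_rfl, level_star htree, Set.diff_self]
      exact Set.subsingleton_empty
  refine ⟨⟨tree, trueH, omits⟩, ⟨hαω.le, (levelLT_star htree).symm⟩,
    level_star htree, ?_⟩
  rw [levelLT_star htree, level_star htree]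
  -- limAt T α \ limAt T α = ∅ after identifying the two sets
  have : limAt T α = limAt T α := rfl
  exact Set.diff_self
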